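/- arXiv:1512.06986 — 3 statements merged into one kernel-verified Lean document; each statement's English description precedes it below -/
import Mathlib

section
/- For every S ∈ {1/2, 1, 3/2, …} there exist rational numbers a_0, a_1, …, a_{2S} such that the swap operator P on ℂ^θ ⊗ ℂ^θ (θ = 2S+1) satisfies P = ∑_{k=0}^{2S} a_k · (S_x·S_y)^k, where S_x·S_y = ∑_{j=1}^{3} Sʲ ⊗ Sʲ. -/
open scoped Kronecker

/-- The spin quantum number `S = (θ−1)/2`. -/
noncomputable def spinS (θ : ℕ) : ℝ := ((θ : ℝ) - 1) / 2

/-- The magnetic quantum number `m` attached to the `i`-th basis vector: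
`m = i − S ∈ {−S, −S+1, …, S}`. -/
noncomputable def mval (θ : ℕ) (i : Fin θ) : ℝ := (i : ℝ) - spinS θ

/-- The spin matrix `S³` (diagonal with entries `m`). -/
noncomputable def spin3 (θ : ℕ) : Matrix (Fin θ) (Fin θ) ℂ :=
  Matrix.diagonal fun i => ((mval θ i : ℝ) : ℂ)

/-- The raising operator `S⁺`, with entries `S⁺_{m+1,m} = √(S(S+1) − m(m+1))`. -/
noncomputable def spinPlus (θ : ℕ) : Matrix (Fin θ) (Fin θ) ℂ :=
  Matrix.of fun i j =>
    if (i : ℕ) = (j : ℕ) + 1 then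
      ((Real.sqrt (spinS θ * (spinS θ + 1) - mval θ j * (mval θ j + 1)) : ℝ) : ℂ)
    else 0

/-- The lowering operator `S⁻`, the transpose of `S⁺`. -/
noncomputable def spinMinus (θ : ℕ) : Matrix (Fin θ) (Fin θ) ℂ :=
  (spinPlus θ).transpose

/-- The spin matrix `S¹ = (S⁺ + S⁻)/2`. -/
noncomputable def spin1 (θ : ℕ) : Matrix (Fin θ) (Fin θ) ℂ :=
  (1 / 2 : ℂ) • (spinPlus θ + spinMinus θ)

/-- The spin matrix `S² = (S⁺ − S⁻)/(2i)`. -/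
noncomputable def spin2 (θ : ℕ) : Matrix (Fin θ) (Fin θ) ℂ :=
  (1 / (2 * Complex.I) : ℂ) • (spinPlus θ - spinMinus θ)

/-- The Heisenberg interaction `S_x·S_y = ∑_{j=1}^3 Sʲ ⊗ Sʲ` on `ℂ^θ ⊗ ℂ^θ`. -/
noncomputable def heisenberg (θ : ℕ) : Matrix (Fin θ × Fin θ) (Fin θ × Fin θ) ℂ :=
  spin1 θ ⊗ₖ spin1 θ + spin2 θ ⊗ₖ spin2 θ + spin3 θ ⊗ₖ spin3 θ

/-- The swap operator `P`, determined by `P(u ⊗ v) = v ⊗ u`. -/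
def swapOp (θ : ℕ) : Matrix (Fin θ × Fin θ) (Fin θ × Fin θ) ℂ :=
  Matrix.of fun p q => if p.1 = q.2 ∧ p.2 = q.1 then 1 else 0

namespace Stmt15
open scoped Matrix


noncomputable def sq (θ j : ℕ) : ℝ := Real.sqrt (((j:ℝ)+1) * ((θ:ℝ)-1-(j:ℝ)))

lemma sq_pos {θ j : ℕ} (h : j + 1 < θ) : 0 < sq θ j := by
  apply Real.sqrt_pos.2
  have : (j:ℝ) + 1 < θ := by exact_mod_cast h
  nlinarith [Nat.cast_nonneg (α := ℝ) j]

lemma sq_sq {θ j : ℕ} (h : j < θ) : sq θ j * sq θ j = ((j:ℝ)+1) * ((θ:ℝ)-1-(j:ℝ)) := by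
  apply Real.mul_self_sqrt
  have : (j:ℝ) + 1 ≤ θ := by exact_mod_cast h
  nlinarith [Nat.cast_nonneg (α := ℝ) j]

lemma spinPlus_apply (θ : ℕ) (i j : Fin θ) :
    spinPlus θ i j = if (i : ℕ) = (j : ℕ) + 1 then ((sq θ j : ℝ) : ℂ) else 0 := by
  have harg : spinS θ * (spinS θ + 1) - mval θ j * (mval θ j + 1)
      = ((j:ℝ)+1) * ((θ:ℝ)-1-(j:ℝ)) := by
    simp only [spinS, mval]; ring
  unfold spinPlus sq
  simp only [Matrix.of_apply, harg]

lemma sumPred {θ : ℕ} (a : Fin θ) (f : Fin θ → ℂ) :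
    (∑ k : Fin θ, if (a:ℕ) = (k:ℕ)+1 then f k else 0) =
      if h : 0 < (a:ℕ) then f ⟨(a:ℕ)-1, Nat.lt_of_le_of_lt (Nat.sub_le _ _) a.isLt⟩ else 0 := by
  split_ifs with h
  · rw [Finset.sum_eq_single_of_mem (⟨(a:ℕ)-1, Nat.lt_of_le_of_lt (Nat.sub_le _ _) a.isLt⟩ : Fin θ)
      (Finset.mem_univ _)]
    · rw [if_pos (by simp only [Fin.val_mk]; omega)]
    · intro k _ hk
      rw [if_neg]
      intro hak
      exact hk (Fin.ext (by simp only [Fin.val_mk]; omega))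
  · apply Finset.sum_eq_zero
    intro k _
    rw [if_neg]; omega

lemma sumSucc {θ : ℕ} (a : Fin θ) (f : Fin θ → ℂ) :
    (∑ k : Fin θ, if (k:ℕ) = (a:ℕ)+1 then f k else 0) =
      if h : (a:ℕ)+1 < θ then f ⟨(a:ℕ)+1, h⟩ else 0 := by
  split_ifs with h
  · rw [Finset.sum_eq_single_of_mem (⟨(a:ℕ)+1, h⟩ : Fin θ) (Finset.mem_univ _)]
    · rw [if_pos (by simp only [Fin.val_mk])]
    · intro k _ hk
      rw [if_neg]
      intro hak
      exact hk (Fin.ext (by simp only [Fin.val_mk]; omega))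
  · apply Finset.sum_eq_zero
    intro k _
    rw [if_neg]
    intro hak
    exact h (hak ▸ k.isLt)

lemma PM_apply (θ : ℕ) (a b : Fin θ) :
    (spinPlus θ * spinMinus θ) a b =
      if a = b ∧ 0 < (a:ℕ) then (((sq θ ((a:ℕ)-1) * sq θ ((a:ℕ)-1) : ℝ)) : ℂ) else 0 := by
  rw [Matrix.mul_apply]
  have key : ∀ k : Fin θ, spinPlus θ a k * spinMinus θ k b
      = if (a:ℕ) = (k:ℕ)+1 then (if (b:ℕ) = (k:ℕ)+1 then ((sq θ k * sq θ k : ℝ) : ℂ) else 0) else 0 := by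
    intro k
    rw [spinMinus, Matrix.transpose_apply, spinPlus_apply, spinPlus_apply]
    split_ifs <;> push_cast <;> ring
  simp_rw [key]
  rw [sumPred]
  by_cases h0 : 0 < (a:ℕ)
  · rw [dif_pos h0]
    simp only [Fin.val_mk]
    by_cases hab : a = b
    · subst hab
      rw [if_pos (by omega), if_pos ⟨rfl, h0⟩]
    · rw [if_neg, if_neg (by tauto)]
      intro hb
      exact hab (Fin.ext (by omega))
  · rw [dif_neg h0, if_neg (by tauto)]

lemma MP_apply (θ : ℕ) (a b : Fin θ) :
    (spinMinus θ * spinPlus θ) a b =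
      if a = b ∧ (a:ℕ)+1 < θ then (((sq θ (a:ℕ) * sq θ (a:ℕ) : ℝ)) : ℂ) else 0 := by
  rw [Matrix.mul_apply]
  have key : ∀ k : Fin θ, spinMinus θ a k * spinPlus θ k b
      = if (k:ℕ) = (a:ℕ)+1 then (if (k:ℕ) = (b:ℕ)+1 then ((sq θ a * sq θ a : ℝ) : ℂ) else 0) else 0 := by
    intro k
    rw [spinMinus, Matrix.transpose_apply, spinPlus_apply, spinPlus_apply]
    by_cases h1 : (k:ℕ) = (a:ℕ)+1
    · rw [if_pos h1, if_pos h1]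
      by_cases h2 : (k:ℕ) = (b:ℕ)+1
      · rw [if_pos h2, if_pos h2]
        have : (a:ℕ) = (b:ℕ) := by omega
        rw [show b = a from Fin.ext (by omega)]
        push_cast; ring
      · rw [if_neg h2, if_neg h2, mul_zero]
    · rw [if_neg h1, if_neg h1, zero_mul]
  simp_rw [key]
  rw [sumSucc]
  by_cases h0 : (a:ℕ)+1 < θ
  · rw [dif_pos h0]
    simp only [Fin.val_mk]
    by_cases hab : a = b
    · subst hab
      rw [if_pos rfl, if_pos (show a = a ∧ (a:ℕ)+1 < θ from ⟨rfl, h0⟩)]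
    · rw [if_neg, if_neg (by tauto)]
      intro hb
      exact hab (Fin.ext (by omega))
  · rw [dif_neg h0, if_neg (by tauto)]

/-- `[S⁺,S⁻] = 2 S³` -/
lemma comm_pm (θ : ℕ) :
    spinPlus θ * spinMinus θ - spinMinus θ * spinPlus θ = (2:ℂ) • spin3 θ := by
  ext a b
  rw [Matrix.sub_apply, PM_apply, MP_apply]
  rcases eq_or_ne a b with rfl | hab
  · simp only [true_and, spin3, Matrix.smul_apply, Matrix.diagonal_apply_eq, smul_eq_mul]
    have hm : mval θ a = (a:ℝ) - ((θ:ℝ)-1)/2 := rfl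
    rcases Nat.eq_zero_or_pos (a:ℕ) with h0 | h0
    · have ha0 : ((a:ℕ):ℝ) = 0 := by exact_mod_cast h0
      rw [if_neg (by omega)]
      rcases lt_or_ge ((a:ℕ)+1) θ with h1 | h1
      · rw [if_pos h1]
        exact_mod_cast (show (0:ℝ) - sq θ a * sq θ a = 2 * mval θ a from by
          rw [sq_sq (by omega), hm, ha0]; ring)
      · rw [if_neg (by omega)]
        have hθ1 : ((θ:ℕ):ℝ) = 1 := by exact_mod_cast (show θ = 1 by omega)
        exact_mod_cast (show (0:ℝ) - 0 = 2 * mval θ a from by rw [hm, ha0, hθ1]; ring)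
    · rw [if_pos h0]
      have hsub : (((a:ℕ)-1 : ℕ):ℝ) = ((a:ℕ):ℝ) - 1 := by
        rw [Nat.cast_sub h0]; simp
      have e1 : sq θ ((a:ℕ)-1) * sq θ ((a:ℕ)-1) = ((a:ℕ):ℝ) * ((θ:ℝ) - (a:ℕ)) := by
        rw [sq_sq (by omega), hsub]; ring
      rcases lt_or_ge ((a:ℕ)+1) θ with h1 | h1
      · rw [if_pos h1]
        exact_mod_cast (show sq θ ((a:ℕ)-1) * sq θ ((a:ℕ)-1) - sq θ a * sq θ a
            = 2 * mval θ a from by rw [e1, sq_sq (by omega), hm]; ring)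
      · rw [if_neg (by omega)]
        have hθa : ((a:ℕ):ℝ) + 1 = θ := by exact_mod_cast (show (a:ℕ) + 1 = θ by omega)
        exact_mod_cast (show sq θ ((a:ℕ)-1) * sq θ ((a:ℕ)-1) - 0
            = 2 * mval θ a from by rw [e1, hm, ← hθa]; ring)
  · simp only [hab, false_and, if_false, spin3, Matrix.smul_apply,
      Matrix.diagonal_apply_ne _ hab, smul_zero, sub_zero]

/-- single-site Casimir: `S⁻S⁺ + S³² + S³ = ((θ²-1)/4) • 1` -/
lemma casimir_site (θ : ℕ) :
    spinMinus θ * spinPlus θ + spin3 θ * spin3 θ + spin3 θ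
      = ((((θ:ℝ)^2 - 1)/4 : ℝ) : ℂ) • 1 := by
  ext a b
  rw [Matrix.add_apply, Matrix.add_apply, MP_apply]
  rcases eq_or_ne a b with rfl | hab
  · simp only [true_and, spin3, Matrix.diagonal_mul_diagonal, Matrix.diagonal_apply_eq,
      Matrix.smul_apply, Matrix.one_apply_eq, smul_eq_mul, mul_one]
    have hm : mval θ a = (a:ℝ) - ((θ:ℝ)-1)/2 := rfl
    rcases lt_or_ge ((a:ℕ)+1) θ with h1 | h1
    · rw [if_pos h1]
      exact_mod_cast (show sq θ a * sq θ a + mval θ a * mval θ a + mval θ a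
          = ((θ:ℝ)^2-1)/4 from by rw [sq_sq (by omega), hm]; ring)
    · rw [if_neg (by omega)]
      have hθa : ((a:ℕ):ℝ) + 1 = θ := by exact_mod_cast (show (a:ℕ) + 1 = θ by omega)
      exact_mod_cast (show (0:ℝ) + mval θ a * mval θ a + mval θ a
          = ((θ:ℝ)^2-1)/4 from by rw [hm, ← hθa]; ring)
  · simp only [hab, false_and, if_false, spin3, Matrix.diagonal_mul_diagonal,
      Matrix.diagonal_apply_ne _ hab, Matrix.smul_apply, Matrix.one_apply_ne hab,
      smul_zero, add_zero, zero_add]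

/-- `[S³,S⁺] = S⁺` -/
lemma comm_3p (θ : ℕ) : spin3 θ * spinPlus θ - spinPlus θ * spin3 θ = spinPlus θ := by
  ext a b
  simp only [Matrix.sub_apply, spin3, Matrix.diagonal_mul, Matrix.mul_diagonal,
    spinPlus_apply]
  split_ifs with h
  · have hm : mval θ a = mval θ b + 1 := by
      simp only [mval]
      have : ((a:ℕ):ℝ) = ((b:ℕ):ℝ) + 1 := by exact_mod_cast h
      rw [this]; ring
    exact_mod_cast (show mval θ a * sq θ b - sq θ b * mval θ b = sq θ b from by
      rw [hm]; ring)
  · simp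

/-- `[S³,S⁻] = -S⁻` -/
lemma comm_3m (θ : ℕ) : spin3 θ * spinMinus θ - spinMinus θ * spin3 θ = -spinMinus θ := by
  ext a b
  simp only [Matrix.sub_apply, spin3, Matrix.diagonal_mul, Matrix.mul_diagonal,
    spinMinus, Matrix.transpose_apply, spinPlus_apply, Matrix.neg_apply]
  split_ifs with h
  · have hm : mval θ b = mval θ a + 1 := by
      simp only [mval]
      have : ((b:ℕ):ℝ) = ((a:ℕ):ℝ) + 1 := by exact_mod_cast h
      rw [this]; ring
    exact_mod_cast (show mval θ a * sq θ a - sq θ a * mval θ b = -sq θ a from by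
      rw [hm]; ring)
  · simp



noncomputable def Em (θ : ℕ) : Matrix (Fin θ × Fin θ) (Fin θ × Fin θ) ℂ :=
  spinPlus θ ⊗ₖ 1 + 1 ⊗ₖ spinPlus θ
noncomputable def Fm (θ : ℕ) : Matrix (Fin θ × Fin θ) (Fin θ × Fin θ) ℂ :=
  spinMinus θ ⊗ₖ 1 + 1 ⊗ₖ spinMinus θ
noncomputable def Hm (θ : ℕ) : Matrix (Fin θ × Fin θ) (Fin θ × Fin θ) ℂ :=
  spin3 θ ⊗ₖ 1 + 1 ⊗ₖ spin3 θ
noncomputable def Cas (θ : ℕ) : Matrix (Fin θ × Fin θ) (Fin θ × Fin θ) ℂ :=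
  Fm θ * Em θ + Hm θ * Hm θ + Hm θ

lemma neg_kron {θ : ℕ} (A B : Matrix (Fin θ) (Fin θ) ℂ) :
    (-A) ⊗ₖ B = -(A ⊗ₖ B) := by
  ext p q; simp [Matrix.kroneckerMap_apply]

lemma kron_neg {θ : ℕ} (A B : Matrix (Fin θ) (Fin θ) ℂ) :
    A ⊗ₖ (-B) = -(A ⊗ₖ B) := by
  ext p q; simp [Matrix.kroneckerMap_apply]

lemma sub_kron {θ : ℕ} (A B C : Matrix (Fin θ) (Fin θ) ℂ) :
    (A - B) ⊗ₖ C = A ⊗ₖ C - B ⊗ₖ C := by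
  ext p q; simp [Matrix.kroneckerMap_apply]; ring

lemma kron_sub {θ : ℕ} (A B C : Matrix (Fin θ) (Fin θ) ℂ) :
    A ⊗ₖ (B - C) = A ⊗ₖ B - A ⊗ₖ C := by
  ext p q; simp [Matrix.kroneckerMap_apply]; ring

lemma kmul {θ : ℕ} (A B C D : Matrix (Fin θ) (Fin θ) ℂ) :
    (A ⊗ₖ B) * (C ⊗ₖ D) = (A*C) ⊗ₖ (B*D) :=
  (Matrix.mul_kronecker_mul A C B D).symm

lemma expand2 {θ : ℕ} (A B : Matrix (Fin θ) (Fin θ) ℂ) :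
    (A ⊗ₖ 1 + 1 ⊗ₖ A) * (B ⊗ₖ 1 + 1 ⊗ₖ B)
      = (A*B) ⊗ₖ 1 + A ⊗ₖ B + B ⊗ₖ A + 1 ⊗ₖ (A*B) := by
  rw [add_mul, mul_add, mul_add, kmul, kmul, kmul, kmul]
  simp only [one_mul, mul_one]
  abel

/-- `[E,F] = H + H` -/
lemma commEF (θ : ℕ) : Em θ * Fm θ - Fm θ * Em θ = Hm θ + Hm θ := by
  have key : spinPlus θ * spinMinus θ = spinMinus θ * spinPlus θ + (2:ℂ) • spin3 θ := by
    have h := comm_pm θ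
    rw [sub_eq_iff_eq_add] at h
    rw [h]; abel
  unfold Em Fm Hm
  rw [expand2, expand2, key, Matrix.add_kronecker, Matrix.kronecker_add,
    Matrix.smul_kronecker, Matrix.kronecker_smul, two_smul, two_smul]
  abel

/-- `[H,F] = -F` -/
lemma commHF (θ : ℕ) : Hm θ * Fm θ = Fm θ * Hm θ - Fm θ := by
  have key : spin3 θ * spinMinus θ = spinMinus θ * spin3 θ + (-(spinMinus θ)) := by
    have h := comm_3m θ
    rw [sub_eq_iff_eq_add] at h
    rw [h]; abel
  unfold Hm Fm
  rw [expand2, expand2, key, Matrix.add_kronecker, Matrix.kronecker_add,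
    neg_kron, kron_neg]
  abel

lemma casF (θ : ℕ) : Cas θ * Fm θ = Fm θ * Cas θ := by
  have hEF : Em θ * Fm θ = Fm θ * Em θ + (Hm θ + Hm θ) := by
    have h := commEF θ
    rw [sub_eq_iff_eq_add] at h
    rw [h]; abel
  have hHF := commHF θ
  calc Cas θ * Fm θ
      = Fm θ * (Em θ * Fm θ) + Hm θ * (Hm θ * Fm θ) + Hm θ * Fm θ := by
        unfold Cas; rw [add_mul, add_mul, mul_assoc, mul_assoc]
    _ = Fm θ * (Fm θ * Em θ + (Hm θ + Hm θ)) + Hm θ * (Fm θ * Hm θ - Fm θ)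
        + (Fm θ * Hm θ - Fm θ) := by rw [hEF, hHF]
    _ = Fm θ * (Fm θ * Em θ) + (Fm θ * Hm θ + Fm θ * Hm θ) + (Hm θ * Fm θ) * Hm θ
        - Hm θ * Fm θ + Fm θ * Hm θ - Fm θ := by
        rw [mul_add, mul_add, mul_sub, ← mul_assoc (Hm θ) (Fm θ) (Hm θ)]
        abel
    _ = Fm θ * (Fm θ * Em θ) + (Fm θ * Hm θ + Fm θ * Hm θ) + (Fm θ * Hm θ - Fm θ) * Hm θ
        - (Fm θ * Hm θ - Fm θ) + Fm θ * Hm θ - Fm θ := by rw [hHF]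
    _ = Fm θ * Cas θ := by
        unfold Cas
        rw [sub_mul, mul_add, mul_add, mul_assoc]
        abel

lemma hI : (1/(2*Complex.I) : ℂ) * (1/(2*Complex.I)) = -(1/4) := by
  rw [div_mul_div_comm, one_mul]
  have h4 : (2*Complex.I) * (2*Complex.I) = -4 := by
    rw [mul_mul_mul_comm, Complex.I_mul_I]; norm_num
  rw [h4]
  norm_num

lemma ham_expand (θ : ℕ) :
    heisenberg θ = (1/2 : ℂ) • (spinPlus θ ⊗ₖ spinMinus θ + spinMinus θ ⊗ₖ spinPlus θ)
      + spin3 θ ⊗ₖ spin3 θ := by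
  unfold heisenberg spin1 spin2
  rw [Matrix.smul_kronecker, Matrix.kronecker_smul, Matrix.smul_kronecker,
    Matrix.kronecker_smul, smul_smul, smul_smul, hI,
    Matrix.add_kronecker, Matrix.kronecker_add, Matrix.kronecker_add,
    sub_kron, kron_sub, kron_sub]
  module

/-- `Cas = Ham + Ham + ((θ²-1)/2) • 1` -/
lemma cas_eq_ham (θ : ℕ) :
    Cas θ = heisenberg θ + heisenberg θ + ((((θ:ℝ)^2-1)/2 : ℝ) : ℂ) • 1 := by
  have hFE : Fm θ * Em θ = (spinMinus θ * spinPlus θ) ⊗ₖ 1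
      + spinMinus θ ⊗ₖ spinPlus θ + spinPlus θ ⊗ₖ spinMinus θ
      + 1 ⊗ₖ (spinMinus θ * spinPlus θ) := by
    unfold Fm Em; rw [expand2]
  have hHH : Hm θ * Hm θ = (spin3 θ * spin3 θ) ⊗ₖ 1 + spin3 θ ⊗ₖ spin3 θ
      + spin3 θ ⊗ₖ spin3 θ + 1 ⊗ₖ (spin3 θ * spin3 θ) := by
    unfold Hm; rw [expand2]
  have hsite := casimir_site θ
  have key : (spinMinus θ * spinPlus θ) ⊗ₖ (1 : Matrix (Fin θ) (Fin θ) ℂ)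
        + (spin3 θ * spin3 θ) ⊗ₖ 1 + spin3 θ ⊗ₖ 1
        + ((1 : Matrix (Fin θ) (Fin θ) ℂ) ⊗ₖ (spinMinus θ * spinPlus θ)
        + 1 ⊗ₖ (spin3 θ * spin3 θ) + 1 ⊗ₖ spin3 θ)
      = ((((θ:ℝ)^2-1)/2 : ℝ) : ℂ) • (1 : Matrix (Fin θ × Fin θ) (Fin θ × Fin θ) ℂ) := by
    rw [← Matrix.add_kronecker, ← Matrix.add_kronecker, ← Matrix.kronecker_add,
      ← Matrix.kronecker_add, hsite, Matrix.smul_kronecker, Matrix.kronecker_smul,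
      Matrix.one_kronecker_one, ← add_smul]
    congr 1
    push_cast
    ring
  unfold Cas
  rw [hFE, hHH, ham_expand]
  unfold Hm
  rw [← key]
  module

lemma swap_mul_kron (θ : ℕ) (A B : Matrix (Fin θ) (Fin θ) ℂ) :
    swapOp θ * (A ⊗ₖ B) = (B ⊗ₖ A) * swapOp θ := by
  ext p q
  rw [Matrix.mul_apply, Matrix.mul_apply]
  have h1 : ∀ r : Fin θ × Fin θ, swapOp θ p r * (A ⊗ₖ B) r q
      = if r = (p.2, p.1) then (A ⊗ₖ B) r q else 0 := by
    intro r
    unfold swapOp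
    simp only [Matrix.of_apply]
    by_cases h : p.1 = r.2 ∧ p.2 = r.1
    · rw [if_pos h, if_pos (Prod.ext h.2.symm h.1.symm), one_mul]
    · rw [if_neg h, if_neg, zero_mul]
      intro hr; subst hr; exact h ⟨rfl, rfl⟩
  have h2 : ∀ r : Fin θ × Fin θ, (B ⊗ₖ A) p r * swapOp θ r q
      = if r = (q.2, q.1) then (B ⊗ₖ A) p r else 0 := by
    intro r
    unfold swapOp
    simp only [Matrix.of_apply]
    by_cases h : r.1 = q.2 ∧ r.2 = q.1
    · rw [if_pos h, if_pos (Prod.ext h.1 h.2), mul_one]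
    · rw [if_neg h, if_neg, mul_zero]
      intro hr; subst hr; exact h ⟨rfl, rfl⟩
  simp_rw [h1, h2, Finset.sum_ite_eq' Finset.univ]
  simp [Matrix.kroneckerMap_apply, mul_comm]

lemma swapF (θ : ℕ) : swapOp θ * Fm θ = Fm θ * swapOp θ := by
  unfold Fm
  rw [mul_add, add_mul, swap_mul_kron, swap_mul_kron]
  abel





/-- ratio of square roots -/
noncomputable def dq (θ j k : ℕ) : ℝ := sq θ (j + (θ-1) - 1 - k) / sq θ k

/-- components of the highest weight vector of spin `j` -/
noncomputable def cv (θ j i : ℕ) : ℝ := (-1)^i * ∏ k ∈ Finset.Ico i (θ-1), dq θ j k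

/-- the highest weight vector of spin `j` -/
noncomputable def vv (θ j : ℕ) : Fin θ × Fin θ → ℂ :=
  fun p => if (p.1:ℕ) + (p.2:ℕ) = j + (θ-1) then ((cv θ j p.1 : ℝ) : ℂ) else 0

lemma sq_ne {θ k : ℕ} (h : k + 1 < θ) : sq θ k ≠ 0 := ne_of_gt (sq_pos h)

lemma prod_dq_all {θ j : ℕ} (hθ : 1 ≤ θ) (hj : j ≤ θ-1) :
    (∏ k ∈ Finset.Ico j (θ-1), dq θ j k) = 1 := by
  set n := θ - 1 with hn
  unfold dq
  rw [Finset.prod_div_distrib]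
  have hnum : (∏ k ∈ Finset.Ico j n, sq θ (j + n - 1 - k)) = ∏ k ∈ Finset.Ico j n, sq θ k := by
    apply Finset.prod_nbij' (fun k => j + n - 1 - k) (fun k => j + n - 1 - k)
    · intro a ha
      rw [Finset.mem_Ico] at ha ⊢
      omega
    · intro a ha
      rw [Finset.mem_Ico] at ha ⊢
      omega
    · intro a ha
      rw [Finset.mem_Ico] at ha
      omega
    · intro a ha
      rw [Finset.mem_Ico] at ha
      omega
    · intro a _
      rfl
  rw [hnum, div_self]
  apply Finset.prod_ne_zero_iff.2
  intro k hk
  rw [Finset.mem_Ico] at hk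
  exact sq_ne (by omega)

lemma cv_rec {θ j i : ℕ} (hji : j ≤ i) (hi : i < θ-1) :
    sq θ i * cv θ j i + sq θ (j + (θ-1) - 1 - i) * cv θ j (i+1) = 0 := by
  unfold cv
  rw [Finset.prod_eq_prod_Ico_succ_bot hi]
  have hne : sq θ i ≠ 0 := sq_ne (by omega)
  have hd : sq θ i * dq θ j i = sq θ (j + (θ-1) - 1 - i) := by
    unfold dq; field_simp
  have expand : sq θ i * ((-1:ℝ)^i * (dq θ j i * ∏ k ∈ Finset.Ico (i+1) (θ-1), dq θ j k))
      = (sq θ i * dq θ j i) * ((-1:ℝ)^i * ∏ k ∈ Finset.Ico (i+1) (θ-1), dq θ j k) := by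
    ring
  rw [expand, hd, pow_succ]
  ring

lemma cv_symm {θ j i : ℕ} (hθ : 1 ≤ θ) (hj : j ≤ θ-1) (hji : j ≤ i) (hi : i ≤ θ-1) :
    cv θ j (j + (θ-1) - i) = (-1)^((θ-1)-j) * cv θ j i := by
  set n := θ - 1 with hn
  have hprodne : ∀ a b : ℕ, j ≤ a → b ≤ n → (∏ k ∈ Finset.Ico a b, dq θ j k) ≠ 0 := by
    intro a b ha hb
    apply Finset.prod_ne_zero_iff.2
    intro k hk
    rw [Finset.mem_Ico] at hk
    unfold dq
    apply div_ne_zero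
    · exact sq_ne (by omega)
    · exact sq_ne (by omega)
  have h3 : (∏ k ∈ Finset.Ico j i, dq θ j k) * (∏ k ∈ Finset.Ico i n, dq θ j k) = 1 := by
    rw [Finset.prod_Ico_consecutive _ hji hi]
    exact prod_dq_all hθ hj
  have h1 : (∏ k ∈ Finset.Ico (j+n-i) n, dq θ j k) = ∏ k ∈ Finset.Ico j i, (dq θ j k)⁻¹ := by
    apply Finset.prod_nbij' (fun k => j + n - 1 - k) (fun k => j + n - 1 - k)
    · intro a ha; rw [Finset.mem_Ico] at ha ⊢; omega
    · intro a ha; rw [Finset.mem_Ico] at ha ⊢; omega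
    · intro a ha; rw [Finset.mem_Ico] at ha; omega
    · intro a ha; rw [Finset.mem_Ico] at ha; omega
    · intro a ha
      rw [Finset.mem_Ico] at ha
      unfold dq
      rw [inv_div]
      congr 2
      omega
  have h2 : (∏ k ∈ Finset.Ico j i, (dq θ j k)⁻¹) = (∏ k ∈ Finset.Ico j i, dq θ j k)⁻¹ :=
    Finset.prod_inv_distrib _
  have h4 : (∏ k ∈ Finset.Ico j i, dq θ j k)⁻¹ = ∏ k ∈ Finset.Ico i n, dq θ j k :=
    inv_eq_of_mul_eq_one_right h3
  unfold cv
  rw [h1, h2, h4]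
  have hsgn : ((-1:ℝ))^(j+n-i) = (-1)^(n-j) * (-1)^i := by
    have e1 : j+n-i + i = (n - j) + 2*j := by omega
    have e2 : ((-1:ℝ))^(j+n-i) * ((-1:ℝ))^i * ((-1:ℝ))^i = ((-1:ℝ))^(j+n-i) := by
      rw [mul_assoc, ← pow_add]
      have : ((-1:ℝ))^(i+i) = 1 := by
        rw [← two_mul, pow_mul]
        norm_num
      rw [this, mul_one]
    calc ((-1:ℝ))^(j+n-i) = ((-1:ℝ))^(j+n-i) * ((-1:ℝ))^i * ((-1:ℝ))^i := e2.symm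
      _ = ((-1:ℝ))^((j+n-i) + i) * ((-1:ℝ))^i := by rw [pow_add]
      _ = ((-1:ℝ))^((n-j) + 2*j) * ((-1:ℝ))^i := by rw [e1]
      _ = (-1)^(n-j) * (-1)^i := by
        rw [pow_add, pow_mul]
        norm_num
  rw [hsgn]
  ring

lemma cv_top (θ j : ℕ) : cv θ j (θ-1) = (-1)^(θ-1) := by
  unfold cv
  rw [Finset.Ico_self, Finset.prod_empty, mul_one]

lemma vv_ne {θ j : ℕ} (hθ : 1 ≤ θ) (hj : j < θ) : vv θ j ≠ 0 := by
  intro h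
  have := congrFun h (⟨θ-1, by omega⟩, ⟨j, hj⟩)
  unfold vv at this
  rw [if_pos (by simp only [Fin.val_mk]; omega)] at this
  simp only [Fin.val_mk, cv_top, Pi.zero_apply] at this
  have h2 : ((-1:ℝ))^(θ-1) = 0 := by exact_mod_cast this
  have h3 : ((-1:ℝ))^(θ-1) ≠ 0 := by
    apply pow_ne_zero
    norm_num
  exact h3 h2

lemma kron_left_mulVec {θ : ℕ} (A : Matrix (Fin θ) (Fin θ) ℂ) (v : Fin θ × Fin θ → ℂ)
    (p : Fin θ × Fin θ) :
    ((A ⊗ₖ (1 : Matrix (Fin θ) (Fin θ) ℂ)) *ᵥ v) p = ∑ c, A p.1 c * v (c, p.2) := by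
  simp only [Matrix.mulVec, dotProduct, Fintype.sum_prod_type, Matrix.kroneckerMap_apply,
    Matrix.one_apply, mul_ite, mul_one, mul_zero, ite_mul, zero_mul]
  apply Finset.sum_congr rfl
  intro c _
  rw [Finset.sum_ite_eq Finset.univ p.2 (fun d => A p.1 c * v (c, d))]
  simp

lemma kron_right_mulVec {θ : ℕ} (A : Matrix (Fin θ) (Fin θ) ℂ) (v : Fin θ × Fin θ → ℂ)
    (p : Fin θ × Fin θ) :
    (((1 : Matrix (Fin θ) (Fin θ) ℂ) ⊗ₖ A) *ᵥ v) p = ∑ d, A p.2 d * v (p.1, d) := by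
  simp only [Matrix.mulVec, dotProduct, Fintype.sum_prod_type, Matrix.kroneckerMap_apply,
    Matrix.one_apply, ite_mul, zero_mul, one_mul]
  rw [Finset.sum_comm]
  apply Finset.sum_congr rfl
  intro d _
  rw [Finset.sum_ite_eq Finset.univ p.1 (fun c => A p.2 d * v (c, d))]
  simp

lemma Em_vv {θ j : ℕ} (hθ : 1 ≤ θ) (hj : j ≤ θ-1) : Em θ *ᵥ vv θ j = 0 := by
  set n := θ - 1 with hn
  funext p
  obtain ⟨a, b⟩ := p
  unfold Em
  rw [Matrix.add_mulVec, Pi.add_apply, kron_left_mulVec, kron_right_mulVec]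
  have key1 : ∀ c : Fin θ, spinPlus θ a c * vv θ j (c, b)
      = if (a:ℕ) = (c:ℕ)+1 then ((sq θ c : ℝ):ℂ) * vv θ j (c, b) else 0 := by
    intro c
    rw [spinPlus_apply]
    split_ifs <;> simp
  have key2 : ∀ d : Fin θ, spinPlus θ b d * vv θ j (a, d)
      = if (b:ℕ) = (d:ℕ)+1 then ((sq θ d : ℝ):ℂ) * vv θ j (a, d) else 0 := by
    intro d
    rw [spinPlus_apply]
    split_ifs <;> simp
  simp_rw [key1, key2]
  rw [sumPred, sumPred]
  by_cases hab : (a:ℕ) + (b:ℕ) = j + n + 1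
  · have h0a : 0 < (a:ℕ) := by have := b.isLt; omega
    have h0b : 0 < (b:ℕ) := by have := a.isLt; omega
    rw [dif_pos h0a, dif_pos h0b]
    unfold vv
    simp only [Fin.val_mk]
    rw [if_pos (by omega), if_pos (by omega)]
    have hbi : (b:ℕ) - 1 = j + n - 1 - ((a:ℕ)-1) := by omega
    have := cv_rec (θ := θ) (j := j) (i := (a:ℕ)-1) (by have := b.isLt; omega)
      (by have := b.isLt; omega)
    rw [← hn] at this
    have goal : sq θ ((a:ℕ)-1) * cv θ j ((a:ℕ)-1) + sq θ ((b:ℕ)-1) * cv θ j (a:ℕ) = 0 := by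
      rw [hbi]
      have ha1 : (a:ℕ) - 1 + 1 = (a:ℕ) := by omega
      rw [← ha1] at this ⊢
      exact this
    rw [Pi.zero_apply]
    exact_mod_cast goal
  · have z1 : (0 < (a:ℕ)) → vv θ j (⟨(a:ℕ)-1, Nat.lt_of_le_of_lt (Nat.sub_le _ _) a.isLt⟩, b) = 0 := by
      intro h
      unfold vv
      rw [if_neg (by simp only [Fin.val_mk]; omega)]
    have z2 : (0 < (b:ℕ)) → vv θ j (a, ⟨(b:ℕ)-1, Nat.lt_of_le_of_lt (Nat.sub_le _ _) b.isLt⟩) = 0 := by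
      intro h
      unfold vv
      rw [if_neg (by simp only [Fin.val_mk]; omega)]
    split_ifs with h1 h2 h2 <;> simp_all

lemma Hm_diag (θ : ℕ) :
    Hm θ = Matrix.diagonal fun p : Fin θ × Fin θ => ((mval θ p.1 + mval θ p.2 : ℝ) : ℂ) := by
  unfold Hm spin3
  ext ⟨a,b⟩ ⟨c,d⟩
  simp only [Matrix.add_apply, Matrix.kroneckerMap_apply, Matrix.diagonal_apply,
    Matrix.one_apply, Prod.mk.injEq]
  by_cases h1 : a = c
  · subst h1
    by_cases h2 : b = d
    · subst h2
      simp only [if_pos rfl, and_self, mul_one, one_mul]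
      push_cast
      ring
    · simp [h2]
  · simp [h1]

lemma Hm_vv {θ j : ℕ} (hθ : 1 ≤ θ) (hj : j ≤ θ-1) :
    Hm θ *ᵥ vv θ j = ((j:ℂ)) • vv θ j := by
  rw [Hm_diag]
  funext p
  rw [Matrix.mulVec_diagonal, Pi.smul_apply]
  unfold vv
  split_ifs with h
  · have hm : mval θ p.1 + mval θ p.2 = (j:ℝ) := by
      unfold mval spinS
      have hc : ((p.1:ℕ):ℝ) + ((p.2:ℕ):ℝ) = (j:ℝ) + ((θ:ℝ) - 1) := by
        have h9 : (((θ:ℕ) - 1 : ℕ):ℝ) = (θ:ℝ) - 1 := by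
          push_cast [Nat.cast_sub hθ]
          ring
        rw [← h9]
        exact_mod_cast h
      linarith
    rw [hm, smul_eq_mul]
    norm_cast
  · simp

lemma swap_mulVec {θ : ℕ} (v : Fin θ × Fin θ → ℂ) (p : Fin θ × Fin θ) :
    (swapOp θ *ᵥ v) p = v (p.2, p.1) := by
  unfold swapOp
  simp only [Matrix.mulVec, dotProduct, Matrix.of_apply]
  have key : ∀ q : Fin θ × Fin θ, (if p.1 = q.2 ∧ p.2 = q.1 then (1:ℂ) else 0) * v q
      = if q = (p.2, p.1) then v q else 0 := by
    intro q
    by_cases h : p.1 = q.2 ∧ p.2 = q.1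
    · rw [if_pos h, if_pos (Prod.ext h.2.symm h.1.symm), one_mul]
    · rw [if_neg h, if_neg, zero_mul]
      intro hq; subst hq; exact h ⟨rfl, rfl⟩
  simp_rw [key, Finset.sum_ite_eq' Finset.univ]
  simp

lemma swap_vv {θ j : ℕ} (hθ : 1 ≤ θ) (hj : j ≤ θ-1) :
    swapOp θ *ᵥ vv θ j = ((-1:ℂ))^((θ-1)-j) • vv θ j := by
  set n := θ - 1 with hn
  funext p
  obtain ⟨a, b⟩ := p
  rw [swap_mulVec, Pi.smul_apply]
  unfold vv
  simp only []
  by_cases h : (a:ℕ) + (b:ℕ) = j + n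
  · rw [if_pos (by omega), if_pos (by omega)]
    have hb : (b:ℕ) = j + n - (a:ℕ) := by omega
    have hja : j ≤ (a:ℕ) := by have := b.isLt; omega
    have han : (a:ℕ) ≤ n := by have := a.isLt; omega
    rw [hb]
    have := cv_symm (θ := θ) (j := j) (i := (a:ℕ)) hθ hj hja han
    rw [← hn] at this
    rw [this]
    push_cast
    try rw [smul_eq_mul]
    try ring
  · rw [if_neg (by omega), if_neg (by omega), smul_zero]




----------------------------------------------------------------

noncomputable def wk (θ j k : ℕ) : Fin θ × Fin θ → ℂ := (Fm θ)^k *ᵥ vv θ j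

lemma wk_zero (θ j : ℕ) : wk θ j 0 = vv θ j := by
  unfold wk
  rw [pow_zero, Matrix.one_mulVec]

lemma wk_succ (θ j k : ℕ) : wk θ j (k+1) = Fm θ *ᵥ wk θ j k := by
  unfold wk
  rw [pow_succ', Matrix.mulVec_mulVec]

variable {θ j : ℕ}

lemma Hm_wk (hθ : 1 ≤ θ) (hj : j ≤ θ-1) (k : ℕ) :
    Hm θ *ᵥ wk θ j k = ((j:ℂ) - k) • wk θ j k := by
  induction k with
  | zero =>
    rw [wk_zero, Hm_vv hθ hj]
    norm_num
  | succ k ih =>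
    rw [wk_succ, Matrix.mulVec_mulVec, commHF, Matrix.sub_mulVec, ← Matrix.mulVec_mulVec,
      ih, Matrix.mulVec_smul, ← wk_succ]
    have hs : ((j:ℂ) - ((k+1:ℕ):ℂ)) = ((j:ℂ) - (k:ℕ)) - 1 := by push_cast; ring
    rw [hs, sub_smul ((j:ℂ) - (k:ℕ)) 1, one_smul]

lemma Em_wk (hθ : 1 ≤ θ) (hj : j ≤ θ-1) (k : ℕ) :
    Em θ *ᵥ wk θ j (k+1) = (((k:ℂ)+1) * (2*(j:ℂ) - k)) • wk θ j k := by
  have hEF : Em θ * Fm θ = Fm θ * Em θ + (Hm θ + Hm θ) := by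
    have h := commEF θ
    rw [sub_eq_iff_eq_add] at h
    rw [h]; abel
  induction k with
  | zero =>
    rw [wk_succ, wk_zero, Matrix.mulVec_mulVec, hEF, Matrix.add_mulVec, Matrix.add_mulVec,
      ← Matrix.mulVec_mulVec, Em_vv hθ hj, Matrix.mulVec_zero, Hm_vv hθ hj, zero_add,
      ← add_smul]
    congr 1
    push_cast
    ring
  | succ k ih =>
    rw [wk_succ θ j (k+1), Matrix.mulVec_mulVec, hEF, Matrix.add_mulVec, Matrix.add_mulVec,
      ← Matrix.mulVec_mulVec, ih, Matrix.mulVec_smul, Hm_wk hθ hj, ← wk_succ, ← add_smul,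
      ← add_smul]
    congr 1
    push_cast
    ring

lemma Cas_vv (hθ : 1 ≤ θ) (hj : j ≤ θ-1) :
    Cas θ *ᵥ vv θ j = ((j:ℂ) * ((j:ℂ)+1)) • vv θ j := by
  unfold Cas
  rw [Matrix.add_mulVec, Matrix.add_mulVec, ← Matrix.mulVec_mulVec, Em_vv hθ hj,
    Matrix.mulVec_zero, ← Matrix.mulVec_mulVec, Hm_vv hθ hj, Matrix.mulVec_smul,
    Hm_vv hθ hj]
  rw [smul_smul, zero_add, ← add_smul]
  congr 1
  ring

lemma Cas_wk (hθ : 1 ≤ θ) (hj : j ≤ θ-1) (k : ℕ) :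
    Cas θ *ᵥ wk θ j k = ((j:ℂ) * ((j:ℂ)+1)) • wk θ j k := by
  induction k with
  | zero => rw [wk_zero]; exact Cas_vv hθ hj
  | succ k ih =>
    rw [wk_succ, Matrix.mulVec_mulVec, casF, ← Matrix.mulVec_mulVec, ih,
      Matrix.mulVec_smul, ← wk_succ]

lemma swap_wk (hθ : 1 ≤ θ) (hj : j ≤ θ-1) (k : ℕ) :
    swapOp θ *ᵥ wk θ j k = ((-1:ℂ))^((θ-1)-j) • wk θ j k := by
  induction k with
  | zero => rw [wk_zero]; exact swap_vv hθ hj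
  | succ k ih =>
    rw [wk_succ, Matrix.mulVec_mulVec, swapF, ← Matrix.mulVec_mulVec, ih,
      Matrix.mulVec_smul, ← wk_succ]

lemma wk_ne (hθ : 1 ≤ θ) (hj : j ≤ θ-1) : ∀ k, k ≤ 2*j → wk θ j k ≠ 0 := by
  intro k
  induction k with
  | zero =>
    intro _
    rw [wk_zero]
    exact vv_ne hθ (by omega)
  | succ k ih =>
    intro hk h0
    have hE := Em_wk hθ hj k
    rw [h0, Matrix.mulVec_zero] at hE
    have hc : (((k:ℂ)+1) * (2*(j:ℂ) - k)) ≠ 0 := by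
      apply mul_ne_zero
      · exact_mod_cast Nat.succ_ne_zero k
      · have h2 : ((2*j - k : ℕ):ℂ) ≠ 0 := by
          rw [Nat.cast_ne_zero]
          omega
        have h3 : ((2*j - k : ℕ):ℂ) = 2*(j:ℂ) - k := by
          push_cast [Nat.cast_sub (by omega : k ≤ 2*j)]
          ring
        rw [← h3]
        exact h2
    have := (smul_eq_zero.1 hE.symm).resolve_left hc
    exact ih (by omega) this

/-- the Heisenberg eigenvalue of the spin-`j` block, as a rational number -/
noncomputable def lam (θ j : ℕ) : ℚ := ((j:ℚ)^2 + j)/2 - ((θ:ℚ)^2-1)/4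

lemma ham_wk (hθ : 1 ≤ θ) (hj : j ≤ θ-1) (k : ℕ) :
    heisenberg θ *ᵥ wk θ j k = ((lam θ j : ℚ) : ℂ) • wk θ j k := by
  have h := congrArg (fun M => M *ᵥ wk θ j k) (cas_eq_ham θ)
  simp only [Matrix.add_mulVec, Matrix.smul_mulVec, Matrix.one_mulVec] at h
  rw [Cas_wk hθ hj] at h
  have h2 : heisenberg θ *ᵥ wk θ j k + heisenberg θ *ᵥ wk θ j k
      = (((j:ℂ) * ((j:ℂ)+1)) - ((((θ:ℝ)^2-1)/2 : ℝ) : ℂ)) • wk θ j k := by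
    rw [sub_smul, h]
    abel
  have h3 : ((1/2:ℂ)) • ((2:ℂ) • (heisenberg θ *ᵥ wk θ j k))
      = ((1/2:ℂ)) • ((((j:ℂ) * ((j:ℂ)+1)) - ((((θ:ℝ)^2-1)/2 : ℝ) : ℂ)) • wk θ j k) := by
    rw [two_smul, h2]
  rw [smul_smul, smul_smul] at h3
  norm_num at h3
  rw [h3]
  congr 1
  unfold lam
  push_cast
  ring

lemma hampow_wk (hθ : 1 ≤ θ) (hj : j ≤ θ-1) (k t : ℕ) :
    (heisenberg θ)^t *ᵥ wk θ j k = (((lam θ j : ℚ) : ℂ))^t • wk θ j k := by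
  induction t with
  | zero => rw [pow_zero, pow_zero, Matrix.one_mulVec, one_smul]
  | succ t ih =>
    rw [pow_succ', ← Matrix.mulVec_mulVec, ih, Matrix.mulVec_smul, ham_wk hθ hj,
      smul_smul, pow_succ']
    congr 1
    ring

lemma sum_mulVec {ι : Type*} (s : Finset ι) (M : ι → Matrix (Fin θ × Fin θ) (Fin θ × Fin θ) ℂ)
    (v : Fin θ × Fin θ → ℂ) :
    (∑ i ∈ s, M i) *ᵥ v = ∑ i ∈ s, (M i *ᵥ v) := by
  ext p
  simp only [Matrix.mulVec, dotProduct, Finset.sum_apply, Matrix.sum_apply,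
    Finset.sum_mul]
  exact Finset.sum_comm

lemma nat_sq_inj (a b : ℕ) (h : a*a + a = b*b + b) : a = b := by
  nlinarith

lemma lam_inj (j1 j2 : ℕ) (h : lam θ j1 = lam θ j2) : j1 = j2 := by
  unfold lam at h
  have h2 : (j1:ℚ)^2 + j1 = (j2:ℚ)^2 + j2 := by linarith
  have h2' : (j1:ℚ)*(j1:ℚ) + (j1:ℚ) = (j2:ℚ)*(j2:ℚ) + (j2:ℚ) := by nlinarith [h2]
  have h3 : (j1*j1 + j1 : ℕ) = (j2*j2 + j2 : ℕ) := by exact_mod_cast h2'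
  exact nat_sq_inj _ _ h3

lemma int_block (θ a b x y : ℤ) (hθz : 1 ≤ θ) (ha : 0 ≤ a) (hb : 0 ≤ b)
    (hx : 0 ≤ x) (hy : 0 ≤ y) (haθ : a < θ) (hbθ : b < θ) (hxa : x ≤ 2*a) (hyb : y ≤ 2*b)
    (hab : a + 1 ≤ b)
    (he : 4*θ*(a*(a+1)) + a - x = 4*θ*(b*(b+1)) + b - y) : False := by
  have h1 : (0:ℤ) ≤ (b - (a+1)) * (b + a + 2) := mul_nonneg (by linarith) (by linarith)
  have h2 : 2*(a+1) ≤ b*(b+1) - a*(a+1) := by nlinarith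
  have h3 : 4*θ*(2*(a+1)) ≤ 4*θ*(b*(b+1) - a*(a+1)) :=
    mul_le_mul_of_nonneg_left h2 (by linarith)
  nlinarith

lemma sum_odds (n : ℕ) : ∑ i ∈ Finset.range n, (2*i+1) = n*n := by
  induction n with
  | zero => simp
  | succ n ih => rw [Finset.sum_range_succ, ih]; ring


end Stmt15

open Stmt15
open scoped Matrix

/-- for every `S ∈ {1/2, 1, 3/2, …}` (i.e. `θ = 2S+1 ≥ 2`) there are rational
numbers `a_0, …, a_{2S}` with `P = ∑_{k=0}^{2S} a_k (S_x·S_y)^k`. -/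
theorem stmt15 (θ : ℕ) (hθ : 2 ≤ θ) :
    ∃ a : Fin θ → ℚ,
      swapOp θ = ∑ k : Fin θ, ((a k : ℚ) : ℂ) • heisenberg θ ^ (k : ℕ) := by

  classical
  have hθ1 : 1 ≤ θ := by omega
  -- the interpolation polynomial
  set ν : Fin θ → ℚ := fun j => lam θ (j:ℕ) with hν
  have hνinj : Function.Injective ν := by
    intro a b hab
    exact Fin.ext (lam_inj _ _ hab)
  set r : Fin θ → ℚ := fun j => (-1)^((θ-1)-(j:ℕ)) with hr
  set q : Polynomial ℚ := Lagrange.interpolate Finset.univ ν r with hq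
  have hdeg : q.natDegree < θ := by
    rcases eq_or_ne q 0 with h0 | h0
    · rw [h0]
      simpa using (show 0 < θ by omega)
    · rw [Polynomial.natDegree_lt_iff_degree_lt h0]
      have := Lagrange.degree_interpolate_lt (s := Finset.univ) (v := ν) r
        (Set.injOn_of_injective hνinj)
      simpa [hq] using this
  have heval : ∀ jf : Fin θ, q.eval (ν jf) = r jf := by
    intro jf
    exact Lagrange.eval_interpolate_at_node r (Set.injOn_of_injective hνinj)
      (Finset.mem_univ jf)
  refine ⟨fun k => q.coeff (k:ℕ), ?_⟩
  -- the eigenbasis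
  set I := (jf : Fin θ) × Fin (2*(jf:ℕ)+1) with hI
  haveI : Nonempty I := ⟨⟨⟨0, by omega⟩, ⟨0, by omega⟩⟩⟩
  set u : I → (Fin θ × Fin θ → ℂ) := fun i => wk θ (i.1:ℕ) (i.2:ℕ) with hu
  set Am : Matrix (Fin θ × Fin θ) (Fin θ × Fin θ) ℂ :=
    ((4*θ : ℕ):ℂ) • Cas θ + Hm θ with hAm
  set μz : I → ℤ := fun i => 4*θ*((i.1:ℕ)*((i.1:ℕ)+1)) + (i.1:ℕ) - (i.2:ℕ) with hμz
  set μ : I → ℂ := fun i => ((μz i : ℤ):ℂ) with hμ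
  have hjle : ∀ i : I, (i.1:ℕ) ≤ θ-1 := fun i => by have := i.1.isLt; omega
  have hkle : ∀ i : I, (i.2:ℕ) ≤ 2*(i.1:ℕ) := fun i => by have := i.2.isLt; omega
  have hAmu : ∀ i : I, Am *ᵥ u i = μ i • u i := by
    intro i
    rw [hAm, Matrix.add_mulVec, Matrix.smul_mulVec, hu]
    simp only []
    rw [Cas_wk hθ1 (hjle i), Hm_wk hθ1 (hjle i), smul_smul, ← add_smul, hμ, hμz]
    congr 1
    push_cast [Nat.cast_sub]
    ring
  have hμinj : Function.Injective μ := by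
    have hz : Function.Injective μz := by
      intro i1 i2 he
      rw [hμz] at he
      simp only [] at he
      obtain ⟨j1, k1⟩ := i1
      obtain ⟨j2, k2⟩ := i2
      have hj1 : (j1:ℕ) < θ := j1.isLt
      have hj2 : (j2:ℕ) < θ := j2.isLt
      have hk1 : (k1:ℕ) ≤ 2*(j1:ℕ) := by have := k1.isLt; omega
      have hk2 : (k2:ℕ) ≤ 2*(j2:ℕ) := by have := k2.isLt; omega
      have he' : 4*(θ:ℤ)*(((j1:ℕ):ℤ)*(((j1:ℕ):ℤ)+1)) + ((j1:ℕ):ℤ) - ((k1:ℕ):ℤ)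
          = 4*(θ:ℤ)*(((j2:ℕ):ℤ)*(((j2:ℕ):ℤ)+1)) + ((j2:ℕ):ℤ) - ((k2:ℕ):ℤ) := he
      have hjj : (j1:ℕ) = (j2:ℕ) := by
        by_contra hne
        have ha : (0:ℤ) ≤ ((j1:ℕ):ℤ) := Int.natCast_nonneg _
        have hb : (0:ℤ) ≤ ((j2:ℕ):ℤ) := Int.natCast_nonneg _
        have hx : (0:ℤ) ≤ ((k1:ℕ):ℤ) := Int.natCast_nonneg _
        have hy : (0:ℤ) ≤ ((k2:ℕ):ℤ) := Int.natCast_nonneg _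
        have haθ : ((j1:ℕ):ℤ) < (θ:ℤ) := by exact_mod_cast hj1
        have hbθ : ((j2:ℕ):ℤ) < (θ:ℤ) := by exact_mod_cast hj2
        have hxa : ((k1:ℕ):ℤ) ≤ 2*((j1:ℕ):ℤ) := by exact_mod_cast hk1
        have hyb : ((k2:ℕ):ℤ) ≤ 2*((j2:ℕ):ℤ) := by exact_mod_cast hk2
        have hθz : (1:ℤ) ≤ (θ:ℤ) := by exact_mod_cast hθ1
        rcases Nat.lt_or_ge (j1:ℕ) (j2:ℕ) with hlt | hge
        · have hab : ((j1:ℕ):ℤ) + 1 ≤ ((j2:ℕ):ℤ) := by exact_mod_cast hlt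
          exact int_block (θ:ℤ) _ _ _ _ hθz ha hb hx hy haθ hbθ hxa hyb hab he'
        · have hlt2 : (j2:ℕ) < (j1:ℕ) := by omega
          have hab : ((j2:ℕ):ℤ) + 1 ≤ ((j1:ℕ):ℤ) := by exact_mod_cast hlt2
          exact int_block (θ:ℤ) _ _ _ _ hθz hb ha hy hx hbθ haθ hyb hxa hab he'.symm
      have hj12 : j1 = j2 := Fin.ext hjj
      subst hj12
      have hkk : ((k1:ℕ):ℤ) = ((k2:ℕ):ℤ) := by linarith [he']
      have : (k1:ℕ) = (k2:ℕ) := by exact_mod_cast hkk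
      exact Sigma.ext rfl (by simpa using Fin.ext this)
    intro i1 i2 he
    apply hz
    have h9 : ((μz i1:ℤ):ℂ) = ((μz i2:ℤ):ℂ) := he
    exact_mod_cast h9
  -- eigenvectors are independent, hence a basis
  have heig : ∀ i : I, Module.End.HasEigenvector (Matrix.toLin' Am) (μ i) (u i) := by
    intro i
    refine ⟨?_, ?_⟩
    · rw [Module.End.mem_eigenspace_iff, Matrix.toLin'_apply]
      exact hAmu i
    · exact wk_ne hθ1 (hjle i) _ (hkle i)
  have hlin : LinearIndependent ℂ u :=
    Module.End.eigenvectors_linearIndependent' (Matrix.toLin' Am) μ hμinj u heig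
  have hcard : Fintype.card I = Module.finrank ℂ (Fin θ × Fin θ → ℂ) := by
    rw [Module.finrank_fintype_fun_eq_card, Fintype.card_sigma]
    simp only [Fintype.card_fin, Fintype.card_prod]
    rw [Fin.sum_univ_eq_sum_range (fun j => 2*j+1) θ, sum_odds]
  set B := basisOfLinearIndependentOfCardEqFinrank hlin hcard with hB
  -- both sides agree on the basis
  have hmain : ∀ i : I, swapOp θ *ᵥ u i
      = (∑ k : Fin θ, ((q.coeff (k:ℕ) : ℚ) : ℂ) • heisenberg θ ^ (k:ℕ)) *ᵥ u i := by
    intro i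
    rw [sum_mulVec]
    have hterm : ∀ k : Fin θ,
        (((q.coeff (k:ℕ) : ℚ) : ℂ) • heisenberg θ ^ (k:ℕ)) *ᵥ u i
          = (((q.coeff (k:ℕ) : ℚ) : ℂ) * ((lam θ (i.1:ℕ) : ℚ):ℂ)^(k:ℕ)) • u i := by
      intro k
      rw [Matrix.smul_mulVec, hu]
      simp only []
      rw [hampow_wk hθ1 (hjle i), smul_smul]
    simp_rw [hterm]
    rw [← Finset.sum_smul]
    have hscal : (∑ k : Fin θ, ((q.coeff (k:ℕ) : ℚ) : ℂ) * ((lam θ (i.1:ℕ) : ℚ):ℂ)^(k:ℕ))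
        = (((-1:ℚ)^((θ-1)-(i.1:ℕ)) : ℚ) : ℂ) := by
      have he1 : q.eval (lam θ (i.1:ℕ)) = (-1:ℚ)^((θ-1)-(i.1:ℕ)) := heval i.1
      have he2 : q.eval (lam θ (i.1:ℕ))
          = ∑ k ∈ Finset.range θ, q.coeff k * (lam θ (i.1:ℕ))^k :=
        Polynomial.eval_eq_sum_range' hdeg _
      have : (∑ k ∈ Finset.range θ, q.coeff k * (lam θ (i.1:ℕ))^k)
          = (-1:ℚ)^((θ-1)-(i.1:ℕ)) := by rw [← he2, he1]
      rw [← Fin.sum_univ_eq_sum_range (fun k => q.coeff k * (lam θ (i.1:ℕ))^k) θ] at this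
      calc (∑ k : Fin θ, ((q.coeff (k:ℕ) : ℚ) : ℂ) * ((lam θ (i.1:ℕ) : ℚ):ℂ)^(k:ℕ))
          = ((∑ k : Fin θ, q.coeff (k:ℕ) * (lam θ (i.1:ℕ))^(k:ℕ) : ℚ) : ℂ) := by
            push_cast
            rfl
        _ = (((-1:ℚ)^((θ-1)-(i.1:ℕ)) : ℚ) : ℂ) := by rw [this]
    rw [hscal, hu]
    simp only []
    rw [swap_wk hθ1 (hjle i)]
    congr 1
    push_cast
    ring
  -- conclude
  apply Matrix.toLin'.injective
  apply B.ext
  intro i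
  rw [hB, coe_basisOfLinearIndependentOfCardEqFinrank]
  rw [Matrix.toLin'_apply, Matrix.toLin'_apply]
  exact hmain i
end

section
/- Let p, q > 0 satisfy 1/p + 1/q = 1. Define f : (0,1) → ℝ by f(s) = (s·log(ps) + (1−s)·log(q(1−s)))/(s − 1/p)² for s ≠ 1/p, and f(1/p) = pq/2 (the value making f continuous at s = 1/p). Then f is convex on the interval (0,1). -/
open Real Set intervalIntegral

section Aux

lemma convexOn_congr' {s : Set ℝ} {f g : ℝ → ℝ} (hf : ConvexOn ℝ s f)
    (h : ∀ x ∈ s, f x = g x) : ConvexOn ℝ s g := by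
  refine ⟨hf.1, fun x hx y hy b c hb hc hbc => ?_⟩
  rw [← h x hx, ← h y hy, ← h _ (hf.1 hx hy hb hc hbc)]
  exact hf.2 hx hy hb hc hbc

lemma convexOn_hh : ConvexOn ℝ (Ioo (0:ℝ) 1) (fun t => 1/(t*(1-t))) := by
  have h1 : ConvexOn ℝ (Ioo (0:ℝ) 1) (fun t : ℝ => t ^ (-1:ℤ)) :=
    ((strictConvexOn_zpow (by norm_num) (by norm_num)).convexOn).subset
      (fun t ht => ht.1) (convex_Ioo 0 1)
  have h2 : ConvexOn ℝ (Ioo (0:ℝ) 1) (fun t : ℝ => (1-t) ^ (-1:ℤ)) := by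
    refine ⟨convex_Ioo 0 1, fun x hx y hy b c hb hc hbc => ?_⟩
    have hx' : (1:ℝ) - x ∈ Ioo (0:ℝ) 1 := ⟨by linarith [hx.2], by linarith [hx.1]⟩
    have hy' : (1:ℝ) - y ∈ Ioo (0:ℝ) 1 := ⟨by linarith [hy.2], by linarith [hy.1]⟩
    have := h1.2 hx' hy' hb hc hbc
    simp only [smul_eq_mul] at this ⊢
    have e : 1 - (b * x + c * y) = b * (1-x) + c * (1-y) := by linarith
    rw [e]; exact this
  refine convexOn_congr' (h1.add h2) (fun t ht => ?_)
  have ht0 : t ≠ 0 := ne_of_gt ht.1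
  have ht1 : (1:ℝ) - t ≠ 0 := by have := ht.2; intro h; linarith [sub_eq_zero.mp h]
  simp only [zpow_neg, zpow_one, Pi.add_apply]
  field_simp
  ring

variable {a : ℝ} (ha : a ∈ Set.Ioo (0:ℝ) 1)

lemma aux_mem {a s u : ℝ} (ha : a ∈ Ioo (0:ℝ) 1) (hs : s ∈ Ioo (0:ℝ) 1)
    (hu : u ∈ Icc (0:ℝ) 1) : a + u * (s - a) ∈ Ioo (0:ℝ) 1 := by
  have h := (convex_Ioo (0:ℝ) 1) ha hs (by linarith [hu.2] : (0:ℝ) ≤ 1 - u) hu.1 (by ring)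
  simp only [smul_eq_mul] at h
  have e : a + u * (s - a) = (1 - u) * a + u * s := by ring
  rwa [e]

lemma aux_cont {a s : ℝ} (ha : a ∈ Ioo (0:ℝ) 1) (hs : s ∈ Ioo (0:ℝ) 1) :
    ContinuousOn (fun u : ℝ => (1 - u) * (1 / ((a + u * (s - a)) * (1 - (a + u * (s - a)))))) (Icc 0 1) := by
  have hc1 : Continuous fun u : ℝ => a + u * (s - a) := by continuity
  refine (continuousOn_const.sub continuousOn_id).mul
    (continuousOn_const.div ((hc1.mul (continuous_const.sub hc1)).continuousOn) ?_)
  intro u hu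
  have hm := aux_mem ha hs hu
  exact ne_of_gt (mul_pos hm.1 (by linarith [hm.2]))

lemma aux_integrable {a s : ℝ} (ha : a ∈ Ioo (0:ℝ) 1) (hs : s ∈ Ioo (0:ℝ) 1) :
    IntervalIntegrable (fun u : ℝ => (1 - u) * (1 / ((a + u * (s - a)) * (1 - (a + u * (s - a))))))
      MeasureTheory.volume 0 1 := by
  refine (aux_cont ha hs).intervalIntegrable_of_Icc (by norm_num)

/-- Convexity of the integral representation. -/
lemma aux_convex {a : ℝ} (ha : a ∈ Ioo (0:ℝ) 1) :
    ConvexOn ℝ (Ioo (0:ℝ) 1) (fun s : ℝ =>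
      ∫ u in (0:ℝ)..1, (1 - u) * (1 / ((a + u * (s - a)) * (1 - (a + u * (s - a)))))) := by
  refine ⟨convex_Ioo 0 1, fun x hx y hy b c hb hc hbc => ?_⟩
  simp only [smul_eq_mul]
  have hz : b * x + c * y ∈ Ioo (0:ℝ) 1 := (convex_Ioo (0:ℝ) 1) hx hy hb hc hbc
  have hix := aux_integrable ha hx
  have hiy := aux_integrable ha hy
  have hiz := aux_integrable ha hz
  have key : ∀ u ∈ Icc (0:ℝ) 1,
      (1 - u) * (1 / ((a + u * (b * x + c * y - a)) * (1 - (a + u * (b * x + c * y - a))))) ≤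
      b * ((1 - u) * (1 / ((a + u * (x - a)) * (1 - (a + u * (x - a)))))) +
      c * ((1 - u) * (1 / ((a + u * (y - a)) * (1 - (a + u * (y - a)))))) := by
    intro u hu
    have h1 := convexOn_hh.2 (aux_mem ha hx hu) (aux_mem ha hy hu) hb hc hbc
    simp only [smul_eq_mul] at h1
    have e : a + u * (b * x + c * y - a) = b * (a + u * (x - a)) + c * (a + u * (y - a)) := by
      linear_combination (u * a - a) * hbc
    rw [e]
    have hu1 : (0:ℝ) ≤ 1 - u := by linarith [hu.2]
    calc (1 - u) * (1 / ((b * (a + u * (x - a)) + c * (a + u * (y - a))) *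
            (1 - (b * (a + u * (x - a)) + c * (a + u * (y - a)))))) ≤
        (1 - u) * (b * (1 / ((a + u * (x - a)) * (1 - (a + u * (x - a))))) +
          c * (1 / ((a + u * (y - a)) * (1 - (a + u * (y - a)))))) :=
          mul_le_mul_of_nonneg_left h1 hu1
      _ = _ := by ring
  calc (∫ u in (0:ℝ)..1, (1 - u) * (1 / ((a + u * (b * x + c * y - a)) * (1 - (a + u * (b * x + c * y - a)))))) ≤
      ∫ u in (0:ℝ)..1,
        (b * ((1 - u) * (1 / ((a + u * (x - a)) * (1 - (a + u * (x - a)))))) +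
         c * ((1 - u) * (1 / ((a + u * (y - a)) * (1 - (a + u * (y - a))))))) := by
        refine integral_mono_on (by norm_num) hiz ((hix.const_mul b).add (hiy.const_mul c)) ?_
        intro u hu; exact key u hu
    _ = b * (∫ u in (0:ℝ)..1, (1 - u) * (1 / ((a + u * (x - a)) * (1 - (a + u * (x - a)))))) +
        c * (∫ u in (0:ℝ)..1, (1 - u) * (1 / ((a + u * (y - a)) * (1 - (a + u * (y - a)))))) := by
        rw [integral_add (hix.const_mul b) (hiy.const_mul c), integral_const_mul, integral_const_mul]

end Aux

/-- for `p, q > 0` with `1/p + 1/q = 1`, the function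
`f(s) = (s·log(ps) + (1−s)·log(q(1−s)))/(s − 1/p)²` (extended continuously by
`f(1/p) = pq/2`) is convex on `(0,1)`. -/
theorem stmt16 (p q : ℝ) (hp : 0 < p) (hq : 0 < q) (hpq : 1 / p + 1 / q = 1) :
    ConvexOn ℝ (Set.Ioo (0 : ℝ) 1) (fun s : ℝ =>
      if s = 1 / p then p * q / 2
      else (s * Real.log (p * s) + (1 - s) * Real.log (q * (1 - s))) / (s - 1 / p) ^ 2) := by
  set a : ℝ := 1 / p with ha_def
  have hap : 0 < a := by positivity
  have h1a : 1 - a = 1 / q := by rw [ha_def]; linarith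
  have ha1 : a < 1 := by
    have : (0:ℝ) < 1 / q := by positivity
    linarith [h1a]
  have haI : a ∈ Ioo (0:ℝ) 1 := ⟨hap, ha1⟩
  refine convexOn_congr' (aux_convex haI) (fun s hs => ?_)
  by_cases hsa : s = a
  · -- value at the center point
    simp only [hsa, sub_self, mul_zero, add_zero, if_pos rfl]
    have hval : 1 / (a * (1 - a)) = p * q := by
      rw [h1a, ha_def]; field_simp
    rw [hval]
    have h1 : (∫ u in (0:ℝ)..1, (1 - u) * (p * q)) = (∫ u in (0:ℝ)..1, (1 - u)) * (p * q) :=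
      integral_mul_const _ _
    rw [h1]
    have h2 : (∫ u in (0:ℝ)..1, (1 - u : ℝ)) = 1 / 2 := by
      rw [integral_sub intervalIntegrable_const intervalIntegral.intervalIntegrable_id,
        integral_const, integral_id]
      norm_num
    rw [h2]; simp; ring
  · rw [if_neg hsa]
    have hsI : s ∈ Ioo (0:ℝ) 1 := hs
    have hc : s - a ≠ 0 := sub_ne_zero.mpr hsa
    have hs0 : s ≠ 0 := ne_of_gt hsI.1
    have hs1 : (1:ℝ) - s ≠ 0 := ne_of_gt (by linarith [hsI.2])
    set ψ : ℝ → ℝ := fun t => ((s - t) / (s - a)) * (1 / (t * (1 - t))) with hψ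
    have comp : ∀ u : ℝ, (1 - u) * (1 / ((a + u * (s - a)) * (1 - (a + u * (s - a))))) =
        ψ ((s - a) * u + a) := by
      intro u
      rw [hψ]
      have e1 : (s - (a + u * (s - a))) / (s - a) = 1 - u := by
        field_simp; ring
      simp only [show (s - a) * u + a = a + u * (s - a) from by ring, e1]
    have step1 : (∫ u in (0:ℝ)..1, (1 - u) * (1 / ((a + u * (s - a)) * (1 - (a + u * (s - a)))))) =
        (s - a)⁻¹ • ∫ t in a..s, ψ t := by
      have := integral_comp_mul_add ψ hc a (a := (0:ℝ)) (b := 1)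
      simp only [mul_zero, zero_add, mul_one] at this
      have e3 : (s - a) + a = s := by ring
      rw [e3] at this
      rw [← this]
      exact integral_congr fun u _ => comp u
    rw [step1]
    have huIcc : uIcc a s ⊆ Ioo (0:ℝ) 1 := by
      intro t ht
      rw [Set.mem_uIcc] at ht
      rcases ht with ⟨h1, h2⟩ | ⟨h1, h2⟩ <;>
        exact ⟨by rcases hsI with ⟨u1, u2⟩; linarith, by rcases hsI with ⟨u1, u2⟩; linarith⟩
    -- FTC computation of ∫ t in a..s, (s - t) / (t * (1 - t))
    set G : ℝ → ℝ := fun t => s * Real.log t - (s - 1) * Real.log (1 - t) with hG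
    have hderiv : ∀ t ∈ uIcc a s, HasDerivAt G (s / t + (s - 1) / (1 - t)) t := by
      intro t ht
      obtain ⟨ht0, ht1⟩ := huIcc ht
      have h1t : (1:ℝ) - t ≠ 0 := ne_of_gt (by linarith)
      have d1 : HasDerivAt (fun t : ℝ => s * Real.log t) (s * t⁻¹) t :=
        (Real.hasDerivAt_log (ne_of_gt ht0)).const_mul s
      have d2' : HasDerivAt (fun t : ℝ => 1 - t) (-1) t := (hasDerivAt_id t).const_sub 1
      have d2 : HasDerivAt (fun t : ℝ => Real.log (1 - t)) ((1 - t)⁻¹ * -1) t :=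
        (Real.hasDerivAt_log h1t).comp t d2'
      have := d1.sub (d2.const_mul (s - 1))
      have e : s / t + (s - 1) / (1 - t) = s * t⁻¹ - (s - 1) * ((1 - t)⁻¹ * -1) := by ring
      rw [e]; exact this
    have hcont : ContinuousOn (fun t : ℝ => s / t + (s - 1) / (1 - t)) (uIcc a s) := by
      refine ContinuousOn.add
        (continuousOn_const.div continuousOn_id fun t ht => ne_of_gt (huIcc ht).1)
        (continuousOn_const.div (continuousOn_const.sub continuousOn_id)
          fun t ht => ne_of_gt (by linarith [(huIcc ht).2]))
    have hint : IntervalIntegrable (fun t : ℝ => s / t + (s - 1) / (1 - t))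
        MeasureTheory.volume a s := hcont.intervalIntegrable
    have hFTC : (∫ t in a..s, (s / t + (s - 1) / (1 - t))) = G s - G a :=
      integral_eq_sub_of_hasDerivAt hderiv hint
    have heqfun : (∫ t in a..s, ψ t) = ∫ t in a..s, (s - a)⁻¹ * (s / t + (s - 1) / (1 - t)) := by
      refine integral_congr fun t ht => ?_
      obtain ⟨ht0, ht1⟩ := huIcc ht
      have h1t : (1:ℝ) - t ≠ 0 := ne_of_gt (by linarith)
      rw [hψ]
      field_simp
      ring
    rw [heqfun, integral_const_mul, hFTC]
    -- now evaluate G s - G a and match with the target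
    have hloga : Real.log a = -Real.log p := by
      rw [ha_def, one_div, Real.log_inv]
    have hlog1a : Real.log (1 - a) = -Real.log q := by
      rw [h1a, one_div, Real.log_inv]
    have hlogps : Real.log (p * s) = Real.log p + Real.log s :=
      Real.log_mul (ne_of_gt hp) hs0
    have hlogqs : Real.log (q * (1 - s)) = Real.log q + Real.log (1 - s) :=
      Real.log_mul (ne_of_gt hq) hs1
    have hGval : G s - G a = s * Real.log (p * s) + (1 - s) * Real.log (q * (1 - s)) := by
      rw [hG]
      simp only [hloga, hlog1a, hlogps, hlogqs]
      ring
    rw [hGval, smul_eq_mul, div_eq_mul_inv, pow_two, mul_inv]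
    ring
end

section
/- Let θ ≥ 2 be an integer and r ∈ {1, …, θ−1}. Define R : (0, 1/r) → ℝ by R(t) = (2θ(θ−r)/r) · ( r·t·log t + (1 − r·t)·log((1 − r·t)/(θ − r)) + log θ ) / (θt − 1)² for t ≠ 1/θ, and R(1/θ) = θ (the value making R continuous at t = 1/θ). Then R is convex on the interval (0, 1/r). -/
open Real Set intervalIntegral

noncomputable section Aux17

def F17 (ρ u : ℝ) : ℝ := ρ / u + ρ ^ 2 / (1 - ρ * u)

def f17 (ρ Θ u : ℝ) : ℝ :=
  ρ * u * Real.log u + (1 - ρ * u) * (Real.log (1 - ρ * u) - Real.log (Θ - ρ)) + Real.log Θ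

def f17' (ρ Θ u : ℝ) : ℝ :=
  ρ * Real.log u - ρ * (Real.log (1 - ρ * u) - Real.log (Θ - ρ))

lemma hasDerivAt_f17 (ρ Θ u : ℝ) (hu : 0 < u) (hu1 : ρ * u < 1) :
    HasDerivAt (f17 ρ Θ) (f17' ρ Θ u) u := by
  have h2 : (0:ℝ) < 1 - ρ * u := by linarith
  have hlin : HasDerivAt (fun x : ℝ => 1 - ρ * x) (-ρ) u := by
    simpa using ((hasDerivAt_id u).const_mul ρ).const_sub 1
  have hlog1 : HasDerivAt Real.log u⁻¹ u := Real.hasDerivAt_log hu.ne'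
  have hlog2 : HasDerivAt (fun x : ℝ => Real.log (1 - ρ * x)) ((1 - ρ * u)⁻¹ * (-ρ)) u := by
    simpa [Function.comp_def] using (Real.hasDerivAt_log h2.ne').comp u hlin
  have hA : HasDerivAt (fun x : ℝ => ρ * x * Real.log x)
      (ρ * Real.log u + ρ * u * u⁻¹) u := by
    simpa [Pi.mul_def] using ((hasDerivAt_id u).const_mul ρ).mul hlog1
  have hB : HasDerivAt (fun x : ℝ => (1 - ρ * x) * (Real.log (1 - ρ * x) - Real.log (Θ - ρ)))
      ((-ρ) * (Real.log (1 - ρ * u) - Real.log (Θ - ρ)) + (1 - ρ * u) * ((1 - ρ * u)⁻¹ * (-ρ)))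
      u := hlin.mul (hlog2.sub_const _)
  have h := (hA.add hB).add_const (Real.log Θ)
  refine h.congr_deriv ?_
  rw [f17']
  field_simp
  ring

lemma hasDerivAt_f17' (ρ Θ u : ℝ) (hu : 0 < u) (hu1 : ρ * u < 1) :
    HasDerivAt (f17' ρ Θ) (F17 ρ u) u := by
  have h2 : (0:ℝ) < 1 - ρ * u := by linarith
  have hlin : HasDerivAt (fun x : ℝ => 1 - ρ * x) (-ρ) u := by
    simpa using ((hasDerivAt_id u).const_mul ρ).const_sub 1
  have hlog1 : HasDerivAt Real.log u⁻¹ u := Real.hasDerivAt_log hu.ne'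
  have hlog2 : HasDerivAt (fun x : ℝ => Real.log (1 - ρ * x)) ((1 - ρ * u)⁻¹ * (-ρ)) u := by
    simpa [Function.comp_def] using (Real.hasDerivAt_log h2.ne').comp u hlin
  have h := (hlog1.const_mul ρ).sub (((hlog2.sub_const (Real.log (Θ - ρ)))).const_mul ρ)
  refine h.congr_deriv ?_
  rw [F17]
  field_simp
  ring

lemma inv17 (x y α β : ℝ) (hx : 0 < x) (hy : 0 < y) (hα : 0 ≤ α) (hβ : 0 ≤ β)
    (hαβ : α + β = 1) : 1 / (α * x + β * y) ≤ α * (1 / x) + β * (1 / y) := by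
  have hp : 0 < α * x + β * y := by
    rcases hα.lt_or_eq with h | h
    · nlinarith [mul_pos h hx, mul_nonneg hβ hy.le]
    · have hβ1 : β = 1 := by linarith
      rw [← h, hβ1]; linarith
  rw [mul_one_div, mul_one_div, div_add_div _ _ hx.ne' hy.ne',
    div_le_div_iff₀ hp (mul_pos hx hy)]
  have hβ1 : β = 1 - α := by linarith
  rw [hβ1]
  nlinarith [mul_nonneg (mul_nonneg hα (by linarith : (0:ℝ) ≤ 1 - α)) (sq_nonneg (x - y))]

lemma F17_convex (ρ x y α β : ℝ) (hρ : 0 < ρ)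
    (hx0 : 0 < x) (hx1 : ρ * x < 1) (hy0 : 0 < y) (hy1 : ρ * y < 1)
    (hα : 0 ≤ α) (hβ : 0 ≤ β) (hαβ : α + β = 1) :
    F17 ρ (α * x + β * y) ≤ α * F17 ρ x + β * F17 ρ y := by
  have h1 := inv17 x y α β hx0 hy0 hα hβ hαβ
  have h2 := inv17 (1 - ρ * x) (1 - ρ * y) α β (by linarith) (by linarith) hα hβ hαβ
  have e : α * (1 - ρ * x) + β * (1 - ρ * y) = 1 - ρ * (α * x + β * y) := by
    linear_combination hαβ
  rw [e] at h2
  have hA := mul_le_mul_of_nonneg_left h1 hρ.le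
  have hB := mul_le_mul_of_nonneg_left h2 (sq_nonneg ρ)
  simp only [F17]
  calc ρ / (α * x + β * y) + ρ ^ 2 / (1 - ρ * (α * x + β * y))
      = ρ * (1 / (α * x + β * y)) + ρ ^ 2 * (1 / (1 - ρ * (α * x + β * y))) := by ring
    _ ≤ ρ * (α * (1 / x) + β * (1 / y))
        + ρ ^ 2 * (α * (1 / (1 - ρ * x)) + β * (1 / (1 - ρ * y))) := add_le_add hA hB
    _ = α * (ρ / x + ρ ^ 2 / (1 - ρ * x)) + β * (ρ / y + ρ ^ 2 / (1 - ρ * y)) := by ring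

end Aux17

section Taylor

lemma f17_val (ρ Θ : ℝ) (hρΘ : ρ < Θ) (hΘ0 : 0 < Θ) : f17 ρ Θ (1/Θ) = 0 := by
  have hne : Θ - ρ ≠ 0 := sub_ne_zero.mpr hρΘ.ne'
  unfold f17
  have h1 : (1:ℝ) - ρ * (1/Θ) = (Θ - ρ)/Θ := by field_simp
  rw [h1, Real.log_div hne hΘ0.ne', one_div, Real.log_inv]
  field_simp
  ring

lemma f17'_val (ρ Θ : ℝ) (hρΘ : ρ < Θ) (hΘ0 : 0 < Θ) : f17' ρ Θ (1/Θ) = 0 := by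
  have hne : Θ - ρ ≠ 0 := sub_ne_zero.mpr hρΘ.ne'
  unfold f17'
  have h1 : (1:ℝ) - ρ * (1/Θ) = (Θ - ρ)/Θ := by field_simp
  rw [h1, Real.log_div hne hΘ0.ne', one_div, Real.log_inv]
  ring

lemma mem17 (ρ Θ t : ℝ) (hρ : 0 < ρ) (hρΘ : ρ < Θ) (ht0 : 0 < t) (ht1 : t < 1/ρ) :
    ∀ s ∈ Set.uIcc (0:ℝ) 1,
      0 < (1 - s) * (1/Θ) + s * t ∧ ρ * ((1 - s) * (1/Θ) + s * t) < 1 := by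
  have hΘ0 : 0 < Θ := hρ.trans hρΘ
  have ha0 : 0 < 1/Θ := by positivity
  have haρ : 1/Θ < 1/ρ := one_div_lt_one_div_of_lt hρ hρΘ
  intro s hs
  rw [Set.uIcc_of_le (by norm_num : (0:ℝ) ≤ 1)] at hs
  have h1 : (1 - s) * (1/Θ) + s * t ∈ Set.Ioo (0:ℝ) (1/ρ) := by
    have := (convex_Ioo (0:ℝ) (1/ρ)) (Set.mem_Ioo.mpr ⟨ha0, haρ⟩)
      (Set.mem_Ioo.mpr ⟨ht0, ht1⟩) (by linarith [hs.2] : (0:ℝ) ≤ 1 - s) hs.1 (by ring)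
    simpa [smul_eq_mul] using this
  refine ⟨h1.1, ?_⟩
  have := h1.2
  rw [lt_div_iff₀ hρ] at this
  linarith

lemma intble17 (ρ Θ t : ℝ) (hρ : 0 < ρ) (hρΘ : ρ < Θ) (ht0 : 0 < t) (ht1 : t < 1/ρ) :
    IntervalIntegrable (fun s => (1 - s) * F17 ρ ((1 - s) * (1/Θ) + s * t))
      MeasureTheory.volume 0 1 := by
  apply ContinuousOn.intervalIntegrable
  apply ContinuousOn.mul
  · exact (continuous_const.sub continuous_id).continuousOn
  · unfold F17
    apply ContinuousOn.add
    · exact continuousOn_const.div (Continuous.continuousOn (by continuity))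
        (fun s hs => (mem17 ρ Θ t hρ hρΘ ht0 ht1 s hs).1.ne')
    · refine continuousOn_const.div (Continuous.continuousOn (by continuity)) ?_
      intro s hs
      have := (mem17 ρ Θ t hρ hρΘ ht0 ht1 s hs).2
      intro hcon
      rw [sub_eq_zero] at hcon
      exact absurd hcon.symm (ne_of_lt this)

lemma taylor17 (ρ Θ t : ℝ) (hρ : 0 < ρ) (hρΘ : ρ < Θ) (ht0 : 0 < t) (ht1 : t < 1/ρ) :
    ∫ s in (0:ℝ)..1, (1 - s) * (t - 1/Θ) ^ 2 * F17 ρ ((1 - s) * (1/Θ) + s * t)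
      = f17 ρ Θ t := by
  have hΘ0 : 0 < Θ := hρ.trans hρΘ
  set a : ℝ := 1/Θ with ha
  have hmem := mem17 ρ Θ t hρ hρΘ ht0 ht1
  have hG : ∀ s ∈ Set.uIcc (0:ℝ) 1,
      HasDerivAt (fun s => f17 ρ Θ ((1 - s) * a + s * t)
        + ((1 - s) * (t - a)) * f17' ρ Θ ((1 - s) * a + s * t))
        ((1 - s) * (t - a) ^ 2 * F17 ρ ((1 - s) * a + s * t)) s := by
    intro s hs
    obtain ⟨h0, h1⟩ := hmem s hs
    have hus : HasDerivAt (fun s : ℝ => (1 - s) * a + s * t) (-1 * a + 1 * t) s :=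
      (((hasDerivAt_id s).const_sub 1).mul_const a).add ((hasDerivAt_id s).mul_const t)
    rw [show (-1 : ℝ) * a + 1 * t = t - a by ring] at hus
    have hf := (hasDerivAt_f17 ρ Θ _ h0 h1).comp s hus
    have hg := (hasDerivAt_f17' ρ Θ _ h0 h1).comp s hus
    have hc : HasDerivAt (fun s : ℝ => (1 - s) * (t - a)) (-(t - a)) s := by
      simpa using ((hasDerivAt_id s).const_sub 1).mul_const (t - a)
    have h := hf.add (hc.mul hg)
    refine h.congr_deriv ?_
    simp only [Function.comp_apply, ha]
    ring
  have hint : IntervalIntegrable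
      (fun s => (1 - s) * (t - a) ^ 2 * F17 ρ ((1 - s) * a + s * t))
      MeasureTheory.volume 0 1 := by
    exact ((intble17 ρ Θ t hρ hρΘ ht0 ht1).const_mul ((t - a) ^ 2)).congr
      (fun x _ => by simp only [ha]; ring)
  have key := intervalIntegral.integral_eq_sub_of_hasDerivAt hG hint
  rw [key]
  norm_num
  rw [f17_val ρ Θ hρΘ hΘ0, f17'_val ρ Θ hρΘ hΘ0]
  ring

end Taylor

/-- for integers `θ ≥ 2` and `1 ≤ r ≤ θ − 1`, the function
`R(t) = (2θ(θ−r)/r)·(rt·log t + (1−rt)·log((1−rt)/(θ−r)) + log θ)/(θt − 1)²`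
(extended continuously by `R(1/θ) = θ`) is convex on `(0, 1/r)`. -/
theorem stmt17 (θ r : ℕ) (hθ : 2 ≤ θ) (hr : 1 ≤ r) (hrθ : r ≤ θ - 1) :
    ConvexOn ℝ (Set.Ioo (0 : ℝ) (1 / (r : ℝ))) (fun t : ℝ =>
      if t = 1 / (θ : ℝ) then (θ : ℝ)
      else (2 * (θ : ℝ) * ((θ : ℝ) - (r : ℝ)) / (r : ℝ)) *
        ((r : ℝ) * t * Real.log t
          + (1 - (r : ℝ) * t) * Real.log ((1 - (r : ℝ) * t) / ((θ : ℝ) - (r : ℝ)))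
          + Real.log (θ : ℝ)) / ((θ : ℝ) * t - 1) ^ 2) := by
  set ρ : ℝ := (r : ℝ) with hρdef
  set Θ : ℝ := (θ : ℝ) with hΘdef
  have hρ0 : (0 : ℝ) < ρ := by
    rw [hρdef]; exact_mod_cast hr
  have hρΘ : ρ < Θ := by
    rw [hρdef, hΘdef]
    have : r < θ := by omega
    exact_mod_cast this
  have hΘ0 : (0 : ℝ) < Θ := hρ0.trans hρΘ
  have hsub : (0 : ℝ) < Θ - ρ := by linarith
  set Φ : ℝ → ℝ := fun t =>
    (2 * (Θ - ρ) / (ρ * Θ)) * ∫ s in (0:ℝ)..1, (1 - s) * F17 ρ ((1 - s) * (1/Θ) + s * t)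
    with hΦdef
  have hc : (0 : ℝ) ≤ 2 * (Θ - ρ) / (ρ * Θ) := by positivity
  have hΦconv : ConvexOn ℝ (Set.Ioo (0 : ℝ) (1/ρ)) Φ := by
    refine ⟨convex_Ioo _ _, ?_⟩
    rintro x ⟨hx0, hx1⟩ y ⟨hy0, hy1⟩ α β hα hβ hαβ
    simp only [smul_eq_mul, hΦdef]
    have hix := intble17 ρ Θ x hρ0 hρΘ hx0 hx1
    have hiy := intble17 ρ Θ y hρ0 hρΘ hy0 hy1
    have hpmem : α * x + β * y ∈ Set.Ioo (0 : ℝ) (1/ρ) := by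
      have := (convex_Ioo (0 : ℝ) (1/ρ)) (Set.mem_Ioo.mpr ⟨hx0, hx1⟩)
        (Set.mem_Ioo.mpr ⟨hy0, hy1⟩) hα hβ hαβ
      simpa [smul_eq_mul] using this
    have hmono : (∫ s in (0:ℝ)..1, (1 - s) * F17 ρ ((1 - s) * (1/Θ) + s * (α * x + β * y)))
        ≤ ∫ s in (0:ℝ)..1, (α * ((1 - s) * F17 ρ ((1 - s) * (1/Θ) + s * x))
            + β * ((1 - s) * F17 ρ ((1 - s) * (1/Θ) + s * y))) := by
      apply intervalIntegral.integral_mono_on (by norm_num)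
        (intble17 ρ Θ _ hρ0 hρΘ hpmem.1 hpmem.2)
        ((hix.const_mul α).add (hiy.const_mul β))
      intro s hs
      have hs' : s ∈ Set.uIcc (0:ℝ) 1 := by
        rw [Set.uIcc_of_le (by norm_num : (0:ℝ) ≤ 1)]; exact hs
      obtain ⟨hx0', hx1'⟩ := mem17 ρ Θ x hρ0 hρΘ hx0 hx1 s hs'
      obtain ⟨hy0', hy1'⟩ := mem17 ρ Θ y hρ0 hρΘ hy0 hy1 s hs'
      have e : (1 - s) * (1/Θ) + s * (α * x + β * y)
          = α * ((1 - s) * (1/Θ) + s * x) + β * ((1 - s) * (1/Θ) + s * y) := by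
        linear_combination ((1 - s) * (1/Θ)) * hαβ.symm
      rw [e]
      have hF := F17_convex ρ _ _ α β hρ0 hx0' hx1' hy0' hy1' hα hβ hαβ
      have h1s : (0:ℝ) ≤ 1 - s := by linarith [hs.2]
      calc (1 - s) * F17 ρ (α * ((1 - s) * (1/Θ) + s * x) + β * ((1 - s) * (1/Θ) + s * y))
          ≤ (1 - s) * (α * F17 ρ ((1 - s) * (1/Θ) + s * x)
              + β * F17 ρ ((1 - s) * (1/Θ) + s * y)) :=
            mul_le_mul_of_nonneg_left hF h1s
        _ = α * ((1 - s) * F17 ρ ((1 - s) * (1/Θ) + s * x))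
              + β * ((1 - s) * F17 ρ ((1 - s) * (1/Θ) + s * y)) := by ring
    rw [intervalIntegral.integral_add (hix.const_mul α) (hiy.const_mul β),
      intervalIntegral.integral_const_mul, intervalIntegral.integral_const_mul] at hmono
    have := mul_le_mul_of_nonneg_left hmono hc
    calc (2 * (Θ - ρ) / (ρ * Θ)) *
          (∫ s in (0:ℝ)..1, (1 - s) * F17 ρ ((1 - s) * (1/Θ) + s * (α * x + β * y)))
        ≤ (2 * (Θ - ρ) / (ρ * Θ)) *
            (α * (∫ s in (0:ℝ)..1, (1 - s) * F17 ρ ((1 - s) * (1/Θ) + s * x))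
              + β * (∫ s in (0:ℝ)..1, (1 - s) * F17 ρ ((1 - s) * (1/Θ) + s * y))) := this
      _ = α * ((2 * (Θ - ρ) / (ρ * Θ)) *
              (∫ s in (0:ℝ)..1, (1 - s) * F17 ρ ((1 - s) * (1/Θ) + s * x)))
            + β * ((2 * (Θ - ρ) / (ρ * Θ)) *
              (∫ s in (0:ℝ)..1, (1 - s) * F17 ρ ((1 - s) * (1/Θ) + s * y))) := by ring
  apply hΦconv.congr
  rintro t ⟨ht0, ht1⟩
  by_cases h : t = 1/Θ
  · simp only [h, ↓reduceIte, hΦdef]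
    have e : ∀ s : ℝ, (1 - s) * (1/Θ) + s * (1/Θ) = 1/Θ := fun s => by ring
    simp_rw [e]
    rw [intervalIntegral.integral_mul_const]
    have hhalf : (∫ s in (0:ℝ)..1, (1 - s)) = 1/2 := by
      rw [integral_sub intervalIntegrable_const intervalIntegrable_id,
        integral_const, integral_id]
      norm_num
    rw [hhalf]
    have h1 : (1:ℝ) - ρ * (1/Θ) = (Θ - ρ)/Θ := by field_simp
    rw [F17, h1]
    field_simp
    ring
  · simp only [if_neg h, hΦdef]
    have hρt : ρ * t < 1 := by
      rw [lt_div_iff₀ hρ0] at ht1; linarith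
    have hlog : Real.log ((1 - ρ * t) / (Θ - ρ))
        = Real.log (1 - ρ * t) - Real.log (Θ - ρ) :=
      Real.log_div (by linarith : (1:ℝ) - ρ * t ≠ 0) hsub.ne'
    have horig : ρ * t * Real.log t + (1 - ρ * t) * Real.log ((1 - ρ * t) / (Θ - ρ))
        + Real.log Θ = f17 ρ Θ t := by
      rw [hlog]; rfl
    have htay := taylor17 ρ Θ t hρ0 hρΘ ht0 ht1
    have hpull : (∫ s in (0:ℝ)..1, (1 - s) * (t - 1/Θ) ^ 2 * F17 ρ ((1 - s) * (1/Θ) + s * t))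
        = (t - 1/Θ) ^ 2 * ∫ s in (0:ℝ)..1, (1 - s) * F17 ρ ((1 - s) * (1/Θ) + s * t) := by
      rw [← intervalIntegral.integral_const_mul]
      apply intervalIntegral.integral_congr
      intro s _
      ring
    have hI : (t - 1/Θ) ^ 2 * (∫ s in (0:ℝ)..1, (1 - s) * F17 ρ ((1 - s) * (1/Θ) + s * t))
        = f17 ρ Θ t := by rw [← hpull, htay]
    have hta : t - 1/Θ ≠ 0 := sub_ne_zero.mpr h
    rw [horig, ← hI]
    have hden : Θ * t - 1 = Θ * (t - 1/Θ) := by field_simp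
    rw [hden]
    have hne2 : ((Θ * (t - 1/Θ)) ^ 2 : ℝ) ≠ 0 := pow_ne_zero 2 (mul_ne_zero hΘ0.ne' hta)
    rw [eq_div_iff hne2]
    generalize (∫ s in (0:ℝ)..1, (1 - s) * F17 ρ ((1 - s) * (1/Θ) + s * t)) = I
    field_simp
end
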